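/- Suppose wci is a weak chord index with values in ℤ, ω assigns ±1 to crossings, Ind is a chord index with Ind = 0 at Ω1 crossings, at Ω2a pairs Ind(c₁)=Ind(c₂) and ω(c₁)=−ω(c₂), and matched crossings under all other moves preserve Ind, wci and ω. Then G_L(t) = Σ_{c ∈ S(L), Ind(c) ≠ 0} ω(c) t^{wci(c)} is invariant under all the generating moves (Ω1, Ω2a, Ω3a, virtual moves). -/

import Mathlib

open Finset LaurentPolynomial

/-- invariance of `G_L(t) = ∑_{c ∈ S(L), Ind c ≠ 0} ω c • t^{wci c}` under
a generating move.  A move from a diagram with self crossings `S` to one with self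
crossings `S'` consists of a bijection `φ : S \ A → S' \ B` preserving `ω`, `Ind`, `wci`,
where either (Ω1) `A` is a single crossing of index `0` and `B = ∅` (or symmetrically);
or (Ω2a) `A` is a pair `{c₁, c₂}` with equal `Ind`, equal `wci` and opposite writhes,
and `B = ∅` (or symmetrically); or (all other generating moves) `A = B = ∅`. -/
theorem G_invariant_under_generating_moves {X : Type} [DecidableEq X]
    (S S' A B : Finset X) (ω Ind wci : X → ℤ) (φ : X → X)
    (hA : A ⊆ S) (hB : B ⊆ S')
    (hbij : Set.BijOn φ ↑(S \ A) ↑(S' \ B))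
    (hpres : ∀ c ∈ S \ A, ω (φ c) = ω c ∧ Ind (φ c) = Ind c ∧ wci (φ c) = wci c)
    (hcase :
      (∃ c, (A = {c} ∧ Ind c = 0 ∧ B = ∅) ∨ (B = {c} ∧ Ind c = 0 ∧ A = ∅)) ∨
      (∃ c₁ c₂, c₁ ≠ c₂ ∧ Ind c₁ = Ind c₂ ∧ wci c₁ = wci c₂ ∧ ω c₁ = - ω c₂ ∧
        ((A = {c₁, c₂} ∧ B = ∅) ∨ (B = {c₁, c₂} ∧ A = ∅))) ∨
      (A = ∅ ∧ B = ∅)) :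
    (∑ c ∈ S.filter (fun c => Ind c ≠ 0), ω c • T (wci c) : LaurentPolynomial ℤ) =
      ∑ c ∈ S'.filter (fun c => Ind c ≠ 0), ω c • T (wci c) := by
  classical
  set f : X → LaurentPolynomial ℤ := fun c => ω c • T (wci c) with hf
  -- main bijection part
  have hmain : ∑ c ∈ (S \ A).filter (fun c => Ind c ≠ 0), f c
      = ∑ c ∈ (S' \ B).filter (fun c => Ind c ≠ 0), f c := by
    apply Finset.sum_bij (fun c _ => φ c)
    · intro c hc
      simp only [Finset.mem_filter] at hc ⊢
      refine ⟨Finset.mem_coe.mp (hbij.mapsTo (Finset.mem_coe.mpr hc.1)), ?_⟩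
      rw [(hpres c hc.1).2.1]; exact hc.2
    · intro a ha b hb hab
      simp only [Finset.mem_filter] at ha hb
      exact hbij.injOn (Finset.mem_coe.mpr ha.1) (Finset.mem_coe.mpr hb.1) hab
    · intro c' hc'
      simp only [Finset.mem_filter] at hc'
      obtain ⟨c, hc, hφ⟩ := hbij.surjOn (Finset.mem_coe.mpr hc'.1)
      have hcm : c ∈ S \ A := Finset.mem_coe.mp hc
      refine ⟨c, Finset.mem_filter.mpr ⟨hcm, ?_⟩, hφ⟩
      rw [← (hpres c hcm).2.1, hφ]
      exact hc'.2
    · intro c hc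
      simp only [Finset.mem_filter] at hc
      obtain ⟨h1, h2, h3⟩ := hpres c hc.1
      simp [hf, h1, h3]
  -- splitting lemma
  have hsplit : ∀ (T A : Finset X), A ⊆ T →
      ∑ c ∈ T.filter (fun c => Ind c ≠ 0), f c
        = ∑ c ∈ (T \ A).filter (fun c => Ind c ≠ 0), f c
          + ∑ c ∈ A.filter (fun c => Ind c ≠ 0), f c := by
    intro T A hTA
    simp only [Finset.sum_filter]
    exact (Finset.sum_sdiff hTA).symm
  -- vanishing of the A/B parts
  have hAzero : ∑ c ∈ A.filter (fun c => Ind c ≠ 0), f c = 0 ∧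
      ∑ c ∈ B.filter (fun c => Ind c ≠ 0), f c = 0 := by
    have pairzero : ∀ c₁ c₂, c₁ ≠ c₂ → Ind c₁ = Ind c₂ → wci c₁ = wci c₂ →
        ω c₁ = - ω c₂ →
        ∑ c ∈ ({c₁, c₂} : Finset X).filter (fun c => Ind c ≠ 0), f c = 0 := by
      intro c₁ c₂ hne hI hw hω
      by_cases h : Ind c₁ = 0
      · have : ({c₁, c₂} : Finset X).filter (fun c => Ind c ≠ 0) = ∅ := by
          apply Finset.filter_eq_empty_iff.mpr
          intro x hx
          rcases Finset.mem_insert.mp hx with rfl | hx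
          · simp [h]
          · rw [Finset.mem_singleton.mp hx]
            simp [← hI, h]
        simp [this]
      · have hfilter : ({c₁, c₂} : Finset X).filter (fun c => Ind c ≠ 0) = {c₁, c₂} := by
          apply Finset.filter_eq_self.mpr
          intro x hx
          rcases Finset.mem_insert.mp hx with rfl | hx
          · exact h
          · rw [Finset.mem_singleton.mp hx, ← hI]; exact h
        rw [hfilter, Finset.sum_pair hne]
        simp [hf, hω, hw, neg_smul]
    rcases hcase with ⟨c, ⟨hA1, hI, hB1⟩ | ⟨hB1, hI, hA1⟩⟩ |
        ⟨c₁, c₂, hne, hI, hw, hω, ⟨hA1, hB1⟩ | ⟨hB1, hA1⟩⟩ | ⟨hA1, hB1⟩ <;>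
      subst hA1 <;> subst hB1 <;>
      refine ⟨?_, ?_⟩ <;>
      first
        | exact pairzero c₁ c₂ hne hI hw hω
        | simp [Finset.filter_singleton, hI]
        | simp
  rw [hsplit S A hA, hsplit S' B hB, hmain, hAzero.1, hAzero.2]
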